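/- Let 1 ≤ p < q < ∞. There exists a constant C > 0 such that for every n ∈ ℕ and every finite family f_1, …, f_n ∈ L^p[0,1], sup_{t>0} t · (#{k : ‖f_k‖_{L^p[0,1]} > t})^{1/q} ≤ C · ‖ x ↦ sup_{t>0} t · (#{k : |f_k(x)| > t})^{1/q} ‖_{L^p[0,1]}. (That is, L^p is ℓ^{q,∞}-concave: ‖(‖f_k‖_{L^p})_k‖_{ℓ^{q,∞}} ≤ C ‖ ‖(f_k(·))_k‖_{ℓ^{q,∞}} ‖_{L^p}.) -/

import Mathlib

open MeasureTheory
open scoped ENNReal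

/-- Lebesgue measure restricted to `[0,1]`. -/
noncomputable def mu01 : Measure ℝ := volume.restrict (Set.Icc 0 1)

/-- The weight `W_p(t) = (log(e/t))^{1-p}` for `t ∈ (0,1]`, `W_p(0)=0`. -/
noncomputable def Wp (p t : ℝ) : ℝ :=
  if t = 0 then 0 else Real.log (Real.exp 1 / t) ^ (1 - p)

/-- The norm of the Lorentz space `X_p` on `[0,1]`:
`‖f‖_{X_p} = (∫_0^∞ W_p(μ{s ∈ [0,1] : |f s|^p > λ}) dλ)^{1/p}`. -/
noncomputable def XpNorm (p : ℝ) (f : ℝ → ℝ) : ℝ≥0∞ :=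
  (∫⁻ lam in Set.Ioi (0 : ℝ),
      ENNReal.ofReal
        (Wp p (volume {s : ℝ | s ∈ Set.Icc (0 : ℝ) 1 ∧ lam < |f s| ^ p}).toReal)) ^ (1 / p)

/-- Luxemburg norm of the exponential Orlicz space `Exp L^α` on `[0,1]`. -/
noncomputable def expLNorm (α : ℝ) (f : ℝ → ℝ) : ℝ≥0∞ :=
  ⨅ (lam : ℝ) (_ : 0 < lam ∧
      ∫⁻ t, ENNReal.ofReal (Real.exp ((|f t| / lam) ^ α) - 1) ∂mu01 ≤ 1),
    ENNReal.ofReal lam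

/-- Weak `ℓ^q` quasinorm of a finite family of reals. -/
noncomputable def weakLq (q : ℝ) {n : ℕ} (a : Fin n → ℝ) : ℝ :=
  ⨆ t : Set.Ioi (0 : ℝ), t.1 * (Nat.card {k : Fin n // t.1 < |a k|} : ℝ) ^ (1 / q)

/-- Weak `ℓ^q` quasinorm of a sequence with values in `[0,∞]`, cardinalities
taken via the counting measure on `ℕ`. -/
noncomputable def weakLqSeq (q : ℝ) (a : ℕ → ℝ≥0∞) : ℝ≥0∞ :=
  ⨆ t : Set.Ioi (0 : ℝ),
    ENNReal.ofReal t.1 * Measure.count {k : ℕ | ENNReal.ofReal t.1 < a k} ^ (1 / q)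

/-- Peetre `K`-functional for the couple `(L^1[0,1], L^∞[0,1])`. -/
noncomputable def Kfun (τ : ℝ) (f : ℝ → ℝ) : ℝ≥0∞ :=
  ⨅ (g : ℝ → ℝ) (h : ℝ → ℝ) (_ : f = g + h),
    eLpNorm g 1 mu01 + ENNReal.ofReal τ * eLpNorm h ⊤ mu01

/-- The Rademacher functions `r_k(t) = sgn(sin(2^k π t))`. -/
noncomputable def rademacher (k : ℕ) (t : ℝ) : ℝ :=
  Real.sign (Real.sin (2 ^ k * Real.pi * t))

/-- Marcinkiewicz space norm `‖f‖_{M_φ} = sup_{0<t≤1} (φ(t)/t) K(t,f;L^1,L^∞)`. -/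
noncomputable def MNorm (φ : ℝ → ℝ) (f : ℝ → ℝ) : ℝ≥0∞ :=
  ⨆ t : {t : ℝ // 0 < t ∧ t ≤ 1}, ENNReal.ofReal (φ t.1 / t.1) * Kfun t.1 f
/-! ### Auxiliary lemmas -/

lemma weakLq_bddAbove (q : ℝ) (hq : 0 < q) {n : ℕ} (a : Fin n → ℝ) :
    BddAbove (Set.range fun t : Set.Ioi (0 : ℝ) =>
      t.1 * (Nat.card {k : Fin n // t.1 < |a k|} : ℝ) ^ (1 / q)) := by
  classical
  refine ⟨(∑ k, |a k|) * (n : ℝ) ^ (1 / q), ?_⟩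
  rintro x ⟨⟨t, ht⟩, rfl⟩
  simp only [Set.mem_Ioi] at ht
  have hsum : (0:ℝ) ≤ ∑ k, |a k| := Finset.sum_nonneg fun k _ => abs_nonneg _
  simp only
  rcases Nat.eq_zero_or_pos (Nat.card {k : Fin n // t < |a k|}) with h0 | hpos
  · rw [h0]
    simp only [Nat.cast_zero]
    rw [Real.zero_rpow (by positivity), mul_zero]
    positivity
  · have hne : Nonempty {k : Fin n // t < |a k|} := Nat.card_pos_iff.mp hpos |>.1
    obtain ⟨⟨k, hk⟩⟩ := hne
    have ht' : t ≤ ∑ k, |a k| :=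
      le_trans hk.le (Finset.single_le_sum (fun k _ => abs_nonneg (a k)) (Finset.mem_univ k))
    have hcard : (Nat.card {k : Fin n // t < |a k|} : ℝ) ≤ (n : ℝ) := by
      have := (Nat.card_eq_fintype_card (α := {k : Fin n // t < |a k|})) ▸
        (Fintype.card_subtype_le (fun k : Fin n => t < |a k|))
      rw [Fintype.card_fin] at this
      exact_mod_cast this
    exact mul_le_mul ht' (Real.rpow_le_rpow (by positivity) hcard (by positivity))
      (by positivity) hsum

lemma weakLq_nonneg (q : ℝ) (hq : 0 < q) {n : ℕ} (a : Fin n → ℝ) : 0 ≤ weakLq q a := by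
  have h := le_ciSup (weakLq_bddAbove q hq a) (⟨1, by simp⟩ : Set.Ioi (0:ℝ))
  refine le_trans ?_ h
  positivity

lemma le_weakLq (q : ℝ) (hq : 0 < q) {n : ℕ} (a : Fin n → ℝ) {t : ℝ} (ht : 0 < t) :
    t * (Nat.card {k : Fin n // t < |a k|} : ℝ) ^ (1 / q) ≤ weakLq q a :=
  le_ciSup (weakLq_bddAbove q hq a) (⟨t, ht⟩ : Set.Ioi (0:ℝ))

lemma card_rpow_le_weakLq (q : ℝ) (hq : 0 < q) {n : ℕ} (a : Fin n → ℝ) (S : Finset (Fin n))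
    {v : ℝ} (hv : 0 ≤ v) (h : ∀ k ∈ S, v ≤ |a k|) :
    v * (S.card : ℝ) ^ (1 / q) ≤ weakLq q a := by
  classical
  have hWnn := weakLq_nonneg q hq a
  rcases hv.eq_or_lt with rfl | hv
  · rw [zero_mul]; exact hWnn
  set c : ℝ := (S.card : ℝ) ^ (1 / q) with hc
  have hc0 : 0 ≤ c := Real.rpow_nonneg (Nat.cast_nonneg _) _
  rcases hc0.eq_or_lt with hc0' | hcpos
  · rw [← hc0', mul_zero]; exact hWnn
  have key : ∀ t : ℝ, 0 < t → t < v → t * c ≤ weakLq q a := by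
    intro t ht htv
    have hsub : S.card ≤ Nat.card {k : Fin n // t < |a k|} := by
      rw [Nat.card_eq_fintype_card, Fintype.card_subtype]
      apply Finset.card_le_card
      intro k hk
      simp only [Finset.mem_filter, Finset.mem_univ, true_and]
      exact lt_of_lt_of_le htv (h k hk)
    have hle : t * c ≤ t * (Nat.card {k : Fin n // t < |a k|} : ℝ) ^ (1 / q) := by
      apply mul_le_mul_of_nonneg_left _ ht.le
      exact Real.rpow_le_rpow (Nat.cast_nonneg _) (by exact_mod_cast hsub) (by positivity)
    exact hle.trans (le_weakLq q hq a ht)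
  by_contra hcon
  push_neg at hcon
  set W := weakLq q a with hWdef
  set t : ℝ := (W / c + v) / 2 with htdef
  have h1 : W / c < v := (div_lt_iff₀ hcpos).mpr hcon
  have h2 : 0 ≤ W / c := div_nonneg hWnn hc0
  have ht0 : 0 < t := by rw [htdef]; linarith
  have htv : t < v := by rw [htdef]; linarith
  have hkey := key t ht0 htv
  have hgt : W < t * c := by
    have hlt : W / c < t := by rw [htdef]; linarith
    calc W = (W / c) * c := by field_simp
    _ < t * c := mul_lt_mul_of_pos_right hlt hcpos
  linarith

lemma sum_inv_rpow_le {r : ℝ} (hr0 : 0 < r) (hr1 : r < 1) (m : ℕ) :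
    ∑ i ∈ Finset.range m, ((i : ℝ) + 1) ^ (-r) ≤ (m : ℝ) ^ (1 - r) / (1 - r) := by
  rcases Nat.eq_zero_or_pos m with rfl | hm
  · simp
    rw [Real.zero_rpow (by linarith), zero_div]
  obtain ⟨n, rfl⟩ : ∃ n, m = n + 1 := ⟨m - 1, (Nat.succ_pred_eq_of_pos hm).symm⟩
  rw [Finset.sum_range_succ']
  have hanti : AntitoneOn (fun x : ℝ => x ^ (-r)) (Set.Icc (1:ℝ) (1 + n)) := by
    intro x hx y hy hxy
    exact Real.rpow_le_rpow_of_nonpos (lt_of_lt_of_le one_pos hx.1) hxy (by linarith)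
  have hint := hanti.sum_le_integral
  have hval : ∫ x in (1:ℝ)..(1 + n), x ^ (-r) =
      ((1 + (n:ℝ)) ^ (-r + 1) - 1 ^ (-r + 1)) / (-r + 1) := by
    rw [integral_rpow (Or.inl (by linarith))]
  have hsum : ∑ i ∈ Finset.range n, ((i : ℝ) + 1 + 1) ^ (-r) ≤
      ((1 + (n:ℝ)) ^ (-r + 1) - 1 ^ (-r + 1)) / (-r + 1) := by
    rw [← hval]
    refine le_trans (le_of_eq ?_) hint
    apply Finset.sum_congr rfl
    intro i _
    push_cast
    ring_nf
  have h1n : ((n:ℝ) + 1) = 1 + (n:ℝ) := by ring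
  have hpow_nonneg : (0:ℝ) ≤ (1 + (n:ℝ)) ^ (-r + 1) := Real.rpow_nonneg (by positivity) _
  have h1le : (1:ℝ) ≤ (1 + (n:ℝ)) ^ (-r + 1) := by
    have := Real.rpow_le_rpow zero_le_one
      (le_add_of_nonneg_right (Nat.cast_nonneg n) : (1:ℝ) ≤ 1 + n) (by linarith : (0:ℝ) ≤ -r + 1)
    simpa using this
  have hs : 0 < 1 - r := by linarith
  rw [Real.one_rpow] at hsum
  push_cast
  rw [h1n]
  have goal_eq : -r + 1 = 1 - r := by ring
  rw [goal_eq] at hsum h1le hpow_nonneg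
  have hz : (0:ℝ) + 1 = 1 := by ring
  calc (∑ i ∈ Finset.range n, ((i:ℝ) + 1 + 1) ^ (-r)) + ((0:ℝ) + 1) ^ (-r)
      ≤ ((1 + (n:ℝ)) ^ (1 - r) - 1) / (1 - r) + 1 := by
        rw [hz, Real.one_rpow]
        exact add_le_add hsum le_rfl
    _ ≤ (1 + (n:ℝ)) ^ (1 - r) / (1 - r) := by
        rw [div_add' _ _ _ hs.ne', div_le_div_iff₀ hs hs]
        nlinarith

lemma sum_abs_rpow_le (p q : ℝ) (hp : 0 < p) (hpq : p < q) (hq : 0 < q) {n : ℕ}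
    (a : Fin n → ℝ) (A : Finset (Fin n)) :
    ∑ k ∈ A, |a k| ^ p ≤
      (weakLq q a) ^ p * ∑ i ∈ Finset.range A.card, ((i : ℝ) + 1) ^ (-(p / q)) := by
  classical
  induction A using Finset.strongInduction with
  | _ A ih =>
    rcases A.eq_empty_or_nonempty with rfl | hA
    · simp
    obtain ⟨k₀, hk₀A, hmin⟩ := A.exists_min_image (fun k => |a k|) hA
    have hWnn := weakLq_nonneg q hq a
    set W := weakLq q a with hW
    -- single element bound
    have hsingle : |a k₀| ^ p ≤ W ^ p * ((A.card : ℝ)) ^ (-(p / q)) := by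
      have hcardpos : (0:ℝ) < (A.card : ℝ) := by
        exact_mod_cast Finset.card_pos.mpr hA
      have h1 : |a k₀| * (A.card : ℝ) ^ (1 / q) ≤ W :=
        card_rpow_le_weakLq q hq a A (abs_nonneg _) (fun k hk => hmin k hk)
      have hcpow : (0:ℝ) < (A.card : ℝ) ^ (1 / q) := Real.rpow_pos_of_pos hcardpos _
      have h2 : |a k₀| ≤ W * (A.card : ℝ) ^ (-(1 / q)) := by
        rw [Real.rpow_neg hcardpos.le, ← div_eq_mul_inv, le_div_iff₀ hcpow]
        exact h1
      calc |a k₀| ^ p ≤ (W * (A.card : ℝ) ^ (-(1 / q))) ^ p :=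
            Real.rpow_le_rpow (abs_nonneg _) h2 hp.le
        _ = W ^ p * ((A.card : ℝ)) ^ (-(p / q)) := by
            rw [Real.mul_rpow hWnn (Real.rpow_nonneg hcardpos.le _),
              ← Real.rpow_mul hcardpos.le]
            congr 2
            ring
    have hsub : A.erase k₀ ⊂ A := Finset.erase_ssubset hk₀A
    have hIH := ih _ hsub
    have hcard : (A.erase k₀).card + 1 = A.card := Finset.card_erase_add_one hk₀A
    have hsplit : ∑ k ∈ A, |a k| ^ p = (∑ k ∈ A.erase k₀, |a k| ^ p) + |a k₀| ^ p :=
      (Finset.sum_erase_add A _ hk₀A).symm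
    have hcastc : (((A.erase k₀).card : ℝ) + 1) = (A.card : ℝ) := by
      exact_mod_cast hcard
    rw [hsplit, ← hcard, Finset.sum_range_succ, mul_add]
    apply add_le_add hIH
    rw [hcastc]
    exact hsingle

/-- Theorem: for `1 ≤ p < q < ∞`, the space `L^p[0,1]` is `ℓ^{q,∞}`-concave. -/
theorem Lp_weak_lq_concave (p q : ℝ) (hp : 1 ≤ p) (hpq : p < q) :
    ∃ C : ℝ, 0 < C ∧ ∀ (n : ℕ) (f : Fin n → ℝ → ℝ),
      (∀ k, MemLp (f k) (ENNReal.ofReal p) mu01) →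
      ENNReal.ofReal (weakLq q fun k => (eLpNorm (f k) (ENNReal.ofReal p) mu01).toReal) ≤
        ENNReal.ofReal C *
          (∫⁻ x, ENNReal.ofReal (weakLq q fun k => f k x) ^ p ∂mu01) ^ (1 / p) := by
  classical
  have hp0 : 0 < p := lt_of_lt_of_le one_pos hp
  have hq0 : 0 < q := hp0.trans hpq
  have hr0 : 0 < p / q := div_pos hp0 hq0
  have hr1 : p / q < 1 := (div_lt_one hq0).mpr hpq
  set Cs : ℝ := 1 / (1 - p / q) with hCsdef
  have hCs0 : 0 < Cs := by
    rw [hCsdef]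
    have : 0 < 1 - p / q := by linarith
    positivity
  refine ⟨Cs ^ (1 / p), Real.rpow_pos_of_pos hCs0 _, ?_⟩
  intro n f hf
  set I : ℝ≥0∞ := ∫⁻ x, ENNReal.ofReal (weakLq q fun k => f k x) ^ p ∂mu01 with hIdef
  by_cases hItop : I = ∞
  · rw [hItop, ENNReal.top_rpow_of_pos (by positivity : (0:ℝ) < 1 / p), ENNReal.mul_top]
    · exact le_top
    · exact (ENNReal.ofReal_pos.mpr (Real.rpow_pos_of_pos hCs0 _)).ne'
  set J : ℝ := I.toReal with hJdef
  have hJ0 : 0 ≤ J := ENNReal.toReal_nonneg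
  set g : Fin n → ℝ := fun k => (eLpNorm (f k) (ENNReal.ofReal p) mu01).toReal with hgdef
  have hofp : (ENNReal.ofReal p) ≠ 0 := by
    simp only [ne_eq, ENNReal.ofReal_eq_zero, not_le]; exact hp0
  have hofp' : (ENNReal.ofReal p) ≠ ∞ := ENNReal.ofReal_ne_top
  have key : ∀ t : ℝ, 0 < t →
      t * (Nat.card {k : Fin n // t < |g k|} : ℝ) ^ (1 / q) ≤ Cs ^ (1 / p) * J ^ (1 / p) := by
    intro t ht
    set A : Finset (Fin n) := Finset.univ.filter (fun k => t < |g k|) with hAdef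
    have hcardA : (Nat.card {k : Fin n // t < |g k|}) = A.card := by
      rw [Nat.card_eq_fintype_card, Fintype.card_subtype]
    rw [hcardA]
    rcases Nat.eq_zero_or_pos A.card with h0 | hpos
    · rw [h0]
      simp only [Nat.cast_zero]
      rw [Real.zero_rpow (by positivity), mul_zero]
      positivity
    have hmpos : (0:ℝ) < (A.card : ℝ) := by exact_mod_cast hpos
    -- each k in A
    have hke : ∀ k ∈ A, ENNReal.ofReal (t ^ p) ≤ ∫⁻ x, ENNReal.ofReal (|f k x| ^ p) ∂mu01 := by
      intro k hk
      have hkA : t < |g k| := (Finset.mem_filter.mp hk).2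
      have hg : t < g k := by
        rwa [hgdef, abs_of_nonneg ENNReal.toReal_nonneg] at hkA
      have hne : eLpNorm (f k) (ENNReal.ofReal p) mu01 ≠ ∞ := (hf k).2.ne
      have h1 : ENNReal.ofReal t < eLpNorm (f k) (ENNReal.ofReal p) mu01 :=
        (ENNReal.ofReal_lt_iff_lt_toReal ht.le hne).mpr hg
      have h2 := ENNReal.rpow_le_rpow h1.le hp0.le
      rw [eLpNorm_eq_lintegral_rpow_enorm_toReal hofp hofp', ENNReal.toReal_ofReal hp0.le,
        ← ENNReal.rpow_mul, one_div_mul_cancel hp0.ne', ENNReal.rpow_one] at h2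
      calc ENNReal.ofReal (t ^ p) = (ENNReal.ofReal t) ^ p :=
            (ENNReal.ofReal_rpow_of_nonneg ht.le hp0.le).symm
        _ ≤ ∫⁻ x, ‖f k x‖ₑ ^ p ∂mu01 := h2
        _ = ∫⁻ x, ENNReal.ofReal (|f k x| ^ p) ∂mu01 := by
            congr 1
            funext x
            rw [Real.enorm_eq_ofReal_abs, ENNReal.ofReal_rpow_of_nonneg (abs_nonneg _) hp0.le]
    have hsum1 : (A.card : ℝ≥0∞) * ENNReal.ofReal (t ^ p) ≤
        ∑ k ∈ A, ∫⁻ x, ENNReal.ofReal (|f k x| ^ p) ∂mu01 := by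
      calc (A.card : ℝ≥0∞) * ENNReal.ofReal (t ^ p)
          = ∑ _k ∈ A, ENNReal.ofReal (t ^ p) := by rw [Finset.sum_const, nsmul_eq_mul]
        _ ≤ _ := Finset.sum_le_sum hke
    have hsum2 : ∑ k ∈ A, ∫⁻ x, ENNReal.ofReal (|f k x| ^ p) ∂mu01 =
        ∫⁻ x, ∑ k ∈ A, ENNReal.ofReal (|f k x| ^ p) ∂mu01 := by
      refine (lintegral_finset_sum' A fun k _ => ?_).symm
      exact (((measurable_abs.comp_aemeasurable ((hf k).aestronglyMeasurable.aemeasurable)).pow_const p)).ennreal_ofReal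
    have hptw : ∀ x, (∑ k ∈ A, ENNReal.ofReal (|f k x| ^ p)) ≤
        ENNReal.ofReal (Cs * (A.card:ℝ) ^ (1 - p/q)) *
          ENNReal.ofReal (weakLq q fun k => f k x) ^ p := by
      intro x
      have hWnn := weakLq_nonneg q hq0 (fun k => f k x)
      have h1 : ∑ k ∈ A, |f k x| ^ p ≤
          Cs * (A.card:ℝ) ^ (1 - p/q) * (weakLq q fun k => f k x) ^ p := by
        have h2 := sum_abs_rpow_le p q hp0 hpq hq0 (fun k => f k x) A
        have h3 := sum_inv_rpow_le hr0 hr1 A.card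
        have h4 : (weakLq q fun k => f k x) ^ p *
              (∑ i ∈ Finset.range A.card, ((i:ℝ)+1) ^ (-(p/q))) ≤
            (weakLq q fun k => f k x) ^ p * ((A.card:ℝ) ^ (1 - p/q) / (1 - p/q)) :=
          mul_le_mul_of_nonneg_left h3 (Real.rpow_nonneg hWnn _)
        calc ∑ k ∈ A, |f k x| ^ p ≤ _ := h2
          _ ≤ _ := h4
          _ = Cs * (A.card:ℝ) ^ (1 - p/q) * (weakLq q fun k => f k x) ^ p := by
              rw [hCsdef]; ring
      calc ∑ k ∈ A, ENNReal.ofReal (|f k x| ^ p)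
          = ENNReal.ofReal (∑ k ∈ A, |f k x| ^ p) :=
            (ENNReal.ofReal_sum_of_nonneg (fun k _ => Real.rpow_nonneg (abs_nonneg _) _)).symm
        _ ≤ ENNReal.ofReal (Cs * (A.card:ℝ) ^ (1 - p/q) * (weakLq q fun k => f k x) ^ p) :=
            ENNReal.ofReal_le_ofReal h1
        _ = _ := by
            rw [ENNReal.ofReal_mul (by positivity),
              ENNReal.ofReal_rpow_of_nonneg hWnn hp0.le]
    have hmain : (A.card : ℝ≥0∞) * ENNReal.ofReal (t ^ p) ≤
        ENNReal.ofReal (Cs * (A.card:ℝ) ^ (1 - p/q)) * I := by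
      refine le_trans hsum1 ?_
      rw [hsum2]
      refine le_trans (lintegral_mono hptw) ?_
      rw [lintegral_const_mul' _ _ ENNReal.ofReal_ne_top]
    have hreal : (A.card:ℝ) * t ^ p ≤ Cs * (A.card:ℝ) ^ (1 - p/q) * J := by
      have h5 : ENNReal.ofReal ((A.card:ℝ) * t ^ p) ≤
          ENNReal.ofReal (Cs * (A.card:ℝ) ^ (1 - p/q)) * I := by
        rw [ENNReal.ofReal_mul (Nat.cast_nonneg _), ENNReal.ofReal_natCast]
        exact hmain
      have h6 := ENNReal.toReal_mono
        (ENNReal.mul_ne_top ENNReal.ofReal_ne_top hItop) h5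
      rw [ENNReal.toReal_ofReal (by positivity), ENNReal.toReal_mul,
        ENNReal.toReal_ofReal (by positivity)] at h6
      exact h6
    have hstep : t ^ p * (A.card:ℝ) ^ (p/q) ≤ Cs * J := by
      have h7 : (t ^ p * (A.card:ℝ) ^ (p/q)) * (A.card:ℝ) ^ (1 - p/q) ≤
          (Cs * J) * (A.card:ℝ) ^ (1 - p/q) := by
        calc (t ^ p * (A.card:ℝ) ^ (p/q)) * (A.card:ℝ) ^ (1 - p/q)
            = ((A.card:ℝ) ^ (p/q) * (A.card:ℝ) ^ (1 - p/q)) * t ^ p := by ring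
          _ = (A.card:ℝ) * t ^ p := by
              rw [← Real.rpow_add hmpos, show p/q + (1 - p/q) = 1 by ring, Real.rpow_one]
          _ ≤ Cs * (A.card:ℝ) ^ (1 - p/q) * J := hreal
          _ = (Cs * J) * (A.card:ℝ) ^ (1 - p/q) := by ring
      exact le_of_mul_le_mul_right h7 (Real.rpow_pos_of_pos hmpos _)
    have hfin : t * (A.card:ℝ) ^ (1/q) = (t ^ p * (A.card:ℝ) ^ (p/q)) ^ (1/p) := by
      rw [Real.mul_rpow (Real.rpow_nonneg ht.le p) (Real.rpow_nonneg hmpos.le _),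
        ← Real.rpow_mul ht.le, ← Real.rpow_mul hmpos.le,
        mul_one_div_cancel hp0.ne', Real.rpow_one,
        show p / q * (1/p) = 1/q by field_simp]
    rw [hfin]
    calc (t ^ p * (A.card:ℝ) ^ (p/q)) ^ (1/p) ≤ (Cs * J) ^ (1/p) :=
          Real.rpow_le_rpow (by positivity) hstep (by positivity)
      _ = Cs ^ (1/p) * J ^ (1/p) := Real.mul_rpow hCs0.le hJ0
  have hconc : weakLq q g ≤ Cs ^ (1/p) * J ^ (1/p) := by
    apply Real.iSup_le
    · rintro ⟨t, ht⟩
      exact key t ht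
    · positivity
  calc ENNReal.ofReal (weakLq q fun k => (eLpNorm (f k) (ENNReal.ofReal p) mu01).toReal)
      ≤ ENNReal.ofReal (Cs ^ (1/p) * J ^ (1/p)) := ENNReal.ofReal_le_ofReal hconc
    _ = ENNReal.ofReal (Cs ^ (1/p)) * ENNReal.ofReal (J ^ (1/p)) :=
        ENNReal.ofReal_mul (by positivity)
    _ = ENNReal.ofReal (Cs ^ (1/p)) * I ^ (1/p) := by
        rw [hJdef, ENNReal.toReal_rpow,
          ENNReal.ofReal_toReal (ENNReal.rpow_ne_top_of_nonneg (by positivity) hItop)]
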